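/- Let λ ∈ ℂ with |λ| < 1 and let (aₙ) be a complex sequence satisfying Σ|aₙ|² = ∞ and max_{1≤n≤N}|aₙ| / (Σ_{n=1}^N |aₙ|²)^{1/2} → 0. Define bₙ = Σ_{k=1}^n λ^{n−k} a_k. Then liminf_{N→∞} (Σ_{n=1}^N |bₙ|²)^{1/2} / (Σ_{n=1}^N |aₙ|²)^{1/2} ≥ 1/(1+|λ|). -/

import Mathlib

open Filter

private lemma sum_Icc_one_eq_range (f : ℕ → ℝ) (M : ℕ) :
    ∑ n ∈ Finset.Icc 1 M, f n = ∑ i ∈ Finset.range M, f (i + 1) := by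
  induction M with
  | zero => simp
  | succ M ih =>
      rw [Finset.sum_Icc_succ_top (Nat.le_add_left 1 M), ih, Finset.sum_range_succ]

theorem stmt_5 (lam : ℂ) (hlam : ‖lam‖ < 1) (a b : ℕ → ℂ)
    (hb : ∀ n, b n = ∑ k ∈ Finset.Icc 1 n, lam ^ (n - k) * a k)
    (ha : ¬ Summable (fun n => ‖a (n + 1)‖ ^ 2))
    (haLind : Tendsto (fun N : ℕ =>
        ((Finset.Icc 1 (N + 1)).sup' (Finset.nonempty_Icc.mpr (Nat.le_add_left 1 N))
            (fun n => ‖a n‖))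
          / Real.sqrt (∑ n ∈ Finset.Icc 1 (N + 1), ‖a n‖ ^ 2)) atTop (nhds 0)) :
    1 / (1 + ‖lam‖) ≤ Filter.liminf (fun N : ℕ =>
        Real.sqrt (∑ n ∈ Finset.Icc 1 (N + 1), ‖b n‖ ^ 2)
          / Real.sqrt (∑ n ∈ Finset.Icc 1 (N + 1), ‖a n‖ ^ 2)) atTop := by
  have hb0 : b 0 = 0 := by simpa using hb 0
  -- recursion b (n+1) = lam * b n + a (n+1)
  have hrec : ∀ n, b (n + 1) = lam * b n + a (n + 1) := by
    intro n
    rw [hb (n + 1), hb n, Finset.sum_Icc_succ_top (Nat.le_add_left 1 n),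
      Finset.mul_sum]
    congr 1
    · apply Finset.sum_congr rfl
      intro k hk
      have hk' : k ≤ n := (Finset.mem_Icc.mp hk).2
      rw [← mul_assoc, ← pow_succ']
      congr 2
      omega
    · simp
  set L := ‖lam‖ with hL
  have hLnn : (0:ℝ) ≤ L := norm_nonneg _
  have hL1 : (0:ℝ) < 1 + L := by linarith
  have hL1' : (0:ℝ) < 1 - L := by linarith
  set A : ℕ → ℝ := fun N => Real.sqrt (∑ n ∈ Finset.Icc 1 (N + 1), ‖a n‖ ^ 2) with hA
  set B : ℕ → ℝ := fun N => Real.sqrt (∑ n ∈ Finset.Icc 1 (N + 1), ‖b n‖ ^ 2) with hBdef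
  -- key inequalities via Euclidean space
  have key : ∀ N : ℕ, A N ≤ (1 + L) * B N ∧ B N ≤ A N + L * B N := by
    intro N
    set M := N + 1 with hM
    let u : EuclideanSpace ℂ (Fin M) := WithLp.toLp 2 (fun i => b (i.1 + 1))
    let v : EuclideanSpace ℂ (Fin M) := WithLp.toLp 2 (fun i => b i.1)
    let w : EuclideanSpace ℂ (Fin M) := WithLp.toLp 2 (fun i => a (i.1 + 1))
    have hw : w = u - lam • v := by
      ext i
      show a (i.1 + 1) = b (i.1 + 1) - lam * b i.1
      rw [hrec i.1]; ring
    have eu : ∑ i : Fin M, ‖u i‖ ^ 2 = ∑ i ∈ Finset.range M, ‖b (i + 1)‖ ^ 2 :=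
      Fin.sum_univ_eq_sum_range (fun i => ‖b (i + 1)‖ ^ 2) M
    have ev : ∑ i : Fin M, ‖v i‖ ^ 2 = ∑ i ∈ Finset.range M, ‖b i‖ ^ 2 :=
      Fin.sum_univ_eq_sum_range (fun i => ‖b i‖ ^ 2) M
    have ew : ∑ i : Fin M, ‖w i‖ ^ 2 = ∑ i ∈ Finset.range M, ‖a (i + 1)‖ ^ 2 :=
      Fin.sum_univ_eq_sum_range (fun i => ‖a (i + 1)‖ ^ 2) M
    have hnu : ‖u‖ = B N := by
      rw [EuclideanSpace.norm_eq, eu, hBdef]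
      congr 1
      rw [sum_Icc_one_eq_range (fun n => ‖b n‖ ^ 2) M]
    have hnw : ‖w‖ = A N := by
      rw [EuclideanSpace.norm_eq, ew, hA]
      congr 1
      rw [sum_Icc_one_eq_range (fun n => ‖a n‖ ^ 2) M]
    have hvu : ‖v‖ ≤ ‖u‖ := by
      rw [EuclideanSpace.norm_eq, EuclideanSpace.norm_eq]
      apply Real.sqrt_le_sqrt
      rw [eu, ev]
      calc ∑ i ∈ Finset.range M, ‖b i‖ ^ 2
          ≤ ∑ i ∈ Finset.range (M + 1), ‖b i‖ ^ 2 :=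
            Finset.sum_le_sum_of_subset_of_nonneg
              (Finset.range_subset_range.mpr (Nat.le_succ M)) (fun i _ _ => sq_nonneg _)
        _ = ∑ i ∈ Finset.range M, ‖b (i + 1)‖ ^ 2 + ‖b 0‖ ^ 2 :=
            Finset.sum_range_succ' _ _
        _ = ∑ i ∈ Finset.range M, ‖b (i + 1)‖ ^ 2 := by rw [hb0]; simp
    constructor
    · calc A N = ‖w‖ := hnw.symm
        _ = ‖u - lam • v‖ := by rw [hw]
        _ ≤ ‖u‖ + ‖lam • v‖ := norm_sub_le _ _
        _ = ‖u‖ + L * ‖v‖ := by rw [norm_smul]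
        _ ≤ ‖u‖ + L * ‖u‖ := by nlinarith
        _ = (1 + L) * B N := by rw [hnu]; ring
    · calc B N = ‖u‖ := hnu.symm
        _ = ‖w + lam • v‖ := by rw [hw, sub_add_cancel]
        _ ≤ ‖w‖ + ‖lam • v‖ := norm_add_le _ _
        _ = A N + L * ‖v‖ := by rw [hnw, norm_smul]
        _ ≤ A N + L * ‖u‖ := by nlinarith
        _ = A N + L * B N := by rw [hnu]
  have hAnn : ∀ N, 0 ≤ A N := fun N => Real.sqrt_nonneg _
  have hBnn : ∀ N, 0 ≤ B N := fun N => Real.sqrt_nonneg _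
  -- coboundedness: B N / A N ≤ 1 / (1 - L)
  have hcob : ∀ N, B N / A N ≤ 1 / (1 - L) := by
    intro N
    rcases eq_or_lt_of_le (hAnn N) with h0 | hpos
    · rw [← h0, div_zero]
      positivity
    · rw [div_le_div_iff₀ hpos hL1']
      have := (key N).2
      nlinarith
    
  -- eventually, A N > 0
  obtain ⟨n₀, hn₀⟩ : ∃ n, a (n + 1) ≠ 0 := by
    by_contra h
    push_neg at h
    exact ha (by simpa [h] using summable_zero)
  have hev : ∀ᶠ N in atTop, 1 / (1 + L) ≤ B N / A N := by
    filter_upwards [eventually_ge_atTop n₀] with N hN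
    have hmem : n₀ + 1 ∈ Finset.Icc 1 (N + 1) := Finset.mem_Icc.mpr ⟨Nat.le_add_left 1 n₀, by omega⟩
    have hsum : ‖a (n₀ + 1)‖ ^ 2 ≤ ∑ n ∈ Finset.Icc 1 (N + 1), ‖a n‖ ^ 2 :=
      Finset.single_le_sum (f := fun n => ‖a n‖ ^ 2) (fun i _ => sq_nonneg _) hmem
    have hApos : 0 < A N := by
      rw [hA]
      apply Real.sqrt_pos.mpr
      have : 0 < ‖a (n₀ + 1)‖ ^ 2 := pow_pos (norm_pos_iff.mpr hn₀) 2
      linarith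
    rw [div_le_div_iff₀ hL1 hApos]
    have := (key N).1
    linarith
  exact le_liminf_of_le (isCoboundedUnder_ge_of_le atTop hcob) hev
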